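/- For ν > 0, a > 0, τ > 0, the CEV forward price v(τ, y) = y · ∫_0^{r(y)} η^{ν−1} e^{−η/2} dη / (2^ν Γ(ν)) with r(y) = (2ν/a)²/(y^{1/ν} τ), is strictly increasing in y ∈ (0,∞) with limits v(τ,0+) = 0 and v(τ,∞) = (2ν²/(a²τ))^ν / (ν Γ(ν)). -/

import Mathlib

open Set Filter Real MeasureTheory

private lemma cev_intble {ν : ℝ} (hν : 0 < ν) (k c : ℝ) :
    IntervalIntegrable (fun t : ℝ => t ^ (ν - 1) * Real.exp (-(t * k)/2)) volume 0 c :=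
  (intervalIntegral.intervalIntegrable_rpow' (by linarith)).mul_continuousOn
    (Continuous.continuousOn (by fun_prop))

private lemma cev_key {ν : ℝ} (hν : 0 < ν) {c y : ℝ} (hc : 0 < c) (hy : 0 < y) :
    y * ∫ η in (0:ℝ)..(c * (y ^ (1/ν))⁻¹), η ^ (ν - 1) * Real.exp (-η/2)
      = ∫ t in (0:ℝ)..c, t ^ (ν - 1) * Real.exp (-(t * (y ^ (1/ν))⁻¹)/2) := by
  set p := y ^ (1/ν) with hp
  have hp0 : 0 < p := Real.rpow_pos_of_pos hy _
  have hk0 : 0 < p⁻¹ := inv_pos.mpr hp0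
  have h1 : (∫ η in (0:ℝ)..(c * p⁻¹), η ^ (ν - 1) * Real.exp (-η/2))
      = p⁻¹ • ∫ t in (0:ℝ)..c, (p⁻¹ * t) ^ (ν - 1) * Real.exp (-(p⁻¹ * t)/2) := by
    rw [intervalIntegral.smul_integral_comp_mul_left
      (fun η => η ^ (ν - 1) * Real.exp (-η/2)) p⁻¹, mul_zero, mul_comm]
  have h2 : (∫ t in (0:ℝ)..c, (p⁻¹ * t) ^ (ν - 1) * Real.exp (-(p⁻¹ * t)/2))
      = (p⁻¹) ^ (ν - 1) * ∫ t in (0:ℝ)..c, t ^ (ν - 1) * Real.exp (-(t * p⁻¹)/2) := by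
    rw [← intervalIntegral.integral_const_mul]
    apply intervalIntegral.integral_congr
    intro t ht
    rw [Set.uIcc_of_le hc.le] at ht
    dsimp only
    rw [Real.mul_rpow hk0.le ht.1, mul_comm p⁻¹ t]
    ring
  have hpν : p ^ ν = y := by
    rw [hp, ← Real.rpow_mul hy.le, one_div, inv_mul_cancel₀ hν.ne', Real.rpow_one]
  have h3 : y * p⁻¹ * (p⁻¹) ^ (ν - 1) = 1 := by
    have e1 : p⁻¹ * (p⁻¹) ^ (ν - 1) = (p⁻¹) ^ ν := by
      nth_rewrite 1 [← Real.rpow_one p⁻¹]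
      rw [← Real.rpow_add hk0]
      norm_num
    rw [mul_assoc, e1, Real.inv_rpow hp0.le, hpν, mul_inv_cancel₀ hy.ne']
  rw [h1, h2, smul_eq_mul, ← mul_assoc, ← mul_assoc, h3, one_mul]

private lemma cev_gamma_ioi {ν : ℝ} (hν : 0 < ν) :
    ∫ x in Ioi (0:ℝ), x ^ (ν - 1) * Real.exp (-x/2) = 2 ^ ν * Real.Gamma ν := by
  rw [show (fun x : ℝ => x ^ (ν - 1) * Real.exp (-x/2))
      = fun x : ℝ => x ^ (ν - 1) * Real.exp (-((1/2 : ℝ) * x)) from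
    funext fun x => by rw [show -x/2 = -((1/2 : ℝ) * x) by ring]]
  rw [Real.integral_rpow_mul_exp_neg_mul_Ioi hν one_half_pos]
  norm_num

private lemma cev_intOn {ν : ℝ} (hν : 0 < ν) :
    IntegrableOn (fun x : ℝ => x ^ (ν - 1) * Real.exp (-x/2)) (Ioi 0) := by
  have h := integrableOn_rpow_mul_exp_neg_mul_rpow (s := ν - 1) (p := 1) (b := 1/2)
    (by linarith) one_pos one_half_pos
  apply h.congr_fun ?_ measurableSet_Ioi
  intro x hx
  dsimp only
  rw [Real.rpow_one, show -(1/2:ℝ) * x = -x/2 by ring]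


/-- The CEV forward price `v(τ,y) = y ∫_0^{r(y)} η^(ν-1) e^(-η/2) dη/(2^ν Γ(ν))`,
`r(y) = (2ν/a)²/(y^(1/ν) τ)`, is strictly increasing in `y` on `(0,∞)` with limits
`v(τ,0+) = 0` and `v(τ,∞) = (2ν²/(a²τ))^ν/(ν Γ(ν))`. -/
theorem cev_forward_monotone_and_limits
    (ν a τ : ℝ) (hν : 0 < ν) (ha : 0 < a) (hτ : 0 < τ) :
    StrictMonoOn
        (fun y : ℝ => y *
          (∫ η in (0:ℝ)..((2*ν/a)^2 / (y ^ (1/ν) * τ)),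
            η ^ (ν - 1) * Real.exp (-η/2)) / ((2:ℝ) ^ ν * Real.Gamma ν))
        (Ioi (0:ℝ)) ∧
    Tendsto
        (fun y : ℝ => y *
          (∫ η in (0:ℝ)..((2*ν/a)^2 / (y ^ (1/ν) * τ)),
            η ^ (ν - 1) * Real.exp (-η/2)) / ((2:ℝ) ^ ν * Real.Gamma ν))
        (nhdsWithin 0 (Ioi 0)) (nhds 0) ∧
    Tendsto
        (fun y : ℝ => y *
          (∫ η in (0:ℝ)..((2*ν/a)^2 / (y ^ (1/ν) * τ)),
            η ^ (ν - 1) * Real.exp (-η/2)) / ((2:ℝ) ^ ν * Real.Gamma ν))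
        atTop
        (nhds ((2*ν^2 / (a^2*τ)) ^ ν / (ν * Real.Gamma ν))) := by
  have hc0 : (0:ℝ) < (2*ν/a)^2 / τ := by positivity
  set c : ℝ := (2*ν/a)^2 / τ with hc_def
  set D : ℝ := (2:ℝ) ^ ν * Real.Gamma ν with hD_def
  have hD : 0 < D := by
    have := Real.Gamma_pos_of_pos hν
    positivity
  have hbnd : ∀ y : ℝ, 0 < y → (2*ν/a)^2 / (y ^ (1/ν) * τ) = c * (y ^ (1/ν))⁻¹ := by
    intro y hy
    have h1 : (0:ℝ) < y ^ (1/ν) := Real.rpow_pos_of_pos hy _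
    rw [hc_def]
    field_simp
  set g : ℝ → ℝ := fun y => ∫ t in (0:ℝ)..c, t ^ (ν - 1) * Real.exp (-(t * (y ^ (1/ν))⁻¹)/2)
    with hg_def
  have hvg : ∀ y : ℝ, 0 < y →
      y * (∫ η in (0:ℝ)..((2*ν/a)^2 / (y ^ (1/ν) * τ)), η ^ (ν - 1) * Real.exp (-η/2)) / D
        = g y / D := by
    intro y hy
    rw [hbnd y hy, cev_key hν hc0 hy]
  -- nonneg and ≤ y bounds
  have hnn : ∀ y : ℝ, 0 < y →
      0 ≤ y * (∫ η in (0:ℝ)..((2*ν/a)^2 / (y ^ (1/ν) * τ)), η ^ (ν - 1) * Real.exp (-η/2)) / D := by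
    intro y hy
    have h1 : (0:ℝ) < y ^ (1/ν) := Real.rpow_pos_of_pos hy _
    have hr : (0:ℝ) ≤ (2*ν/a)^2 / (y ^ (1/ν) * τ) := by positivity
    apply div_nonneg _ hD.le
    apply mul_nonneg hy.le
    apply intervalIntegral.integral_nonneg hr
    intro t ht
    exact mul_nonneg (Real.rpow_nonneg ht.1 _) (Real.exp_nonneg _)
  have hub : ∀ y : ℝ, 0 < y →
      y * (∫ η in (0:ℝ)..((2*ν/a)^2 / (y ^ (1/ν) * τ)), η ^ (ν - 1) * Real.exp (-η/2)) / D
        ≤ y := by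
    intro y hy
    have h1 : (0:ℝ) < y ^ (1/ν) := Real.rpow_pos_of_pos hy _
    have hr : (0:ℝ) < (2*ν/a)^2 / (y ^ (1/ν) * τ) := by positivity
    have hIle : (∫ η in (0:ℝ)..((2*ν/a)^2 / (y ^ (1/ν) * τ)), η ^ (ν - 1) * Real.exp (-η/2))
        ≤ D := by
      rw [intervalIntegral.integral_of_le hr.le]
      calc (∫ η in Ioc (0:ℝ) ((2*ν/a)^2 / (y ^ (1/ν) * τ)), η ^ (ν - 1) * Real.exp (-η/2))
          ≤ ∫ η in Ioi (0:ℝ), η ^ (ν - 1) * Real.exp (-η/2) := by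
            apply setIntegral_mono_set (cev_intOn hν) ?_ Ioc_subset_Ioi_self.eventuallyLE
            filter_upwards [ae_restrict_mem measurableSet_Ioi] with x hx
            exact mul_nonneg (Real.rpow_nonneg (le_of_lt hx) _) (Real.exp_nonneg _)
        _ = D := cev_gamma_ioi hν
    calc y * (∫ η in (0:ℝ)..((2*ν/a)^2 / (y ^ (1/ν) * τ)), η ^ (ν - 1) * Real.exp (-η/2)) / D
        ≤ y * D / D := by gcongr
      _ = y := mul_div_cancel_right₀ y hD.ne'
  refine ⟨?_, ?_, ?_⟩
  · -- strict monotonicity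
    intro y1 hy1 y2 hy2 h12
    simp only [Set.mem_Ioi] at hy1 hy2
    simp only
    rw [hvg y1 hy1, hvg y2 hy2]
    have hp1 : (0:ℝ) < y1 ^ (1/ν) := Real.rpow_pos_of_pos hy1 _
    have hk : (y2 ^ (1/ν))⁻¹ < (y1 ^ (1/ν))⁻¹ :=
      inv_strictAnti₀ hp1 (Real.rpow_lt_rpow hy1.le h12 (by positivity))
    have hk2 : (0:ℝ) < (y2 ^ (1/ν))⁻¹ := by positivity
    have hgg : g y1 < g y2 := by
      rw [hg_def]
      dsimp only
      rw [← sub_pos, ← intervalIntegral.integral_sub (cev_intble hν _ c) (cev_intble hν _ c)]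
      apply intervalIntegral.intervalIntegral_pos_of_pos_on
        ((cev_intble hν _ c).sub (cev_intble hν _ c)) _ hc0
      intro t ht
      have ht0 : 0 < t := ht.1
      have hexp : Real.exp (-(t * (y1 ^ (1/ν))⁻¹)/2) < Real.exp (-(t * (y2 ^ (1/ν))⁻¹)/2) := by
        apply Real.exp_lt_exp.mpr
        nlinarith
      have h0 : 0 < t ^ (ν - 1) := Real.rpow_pos_of_pos ht0 _
      nlinarith
    exact (div_lt_div_iff_of_pos_right hD).mpr hgg
  · -- limit at 0+
    refine tendsto_of_tendsto_of_tendsto_of_le_of_le' tendsto_const_nhds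
      (tendsto_id.mono_left nhdsWithin_le_nhds) ?_ ?_
    · filter_upwards [self_mem_nhdsWithin] with y hy
      exact hnn y hy
    · filter_upwards [self_mem_nhdsWithin] with y hy
      exact hub y hy
  · -- limit at ∞
    have hkT : Tendsto (fun y : ℝ => (y ^ (1/ν))⁻¹) atTop (nhds 0) :=
      (tendsto_rpow_atTop (by positivity : (0:ℝ) < 1/ν)).inv_tendsto_atTop
    have hup : ∀ y : ℝ, 0 < y → g y ≤ c ^ ν / ν := by
      intro y hy
      have hkpos : (0:ℝ) ≤ (y ^ (1/ν))⁻¹ := by positivity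
      have h1 : g y ≤ ∫ t in (0:ℝ)..c, t ^ (ν - 1) := by
        apply intervalIntegral.integral_mono_on hc0.le (cev_intble hν _ c)
          (intervalIntegral.intervalIntegrable_rpow' (by linarith))
        intro t ht
        have hexp : Real.exp (-(t * (y ^ (1/ν))⁻¹)/2) ≤ 1 := by
          rw [Real.exp_le_one_iff]
          nlinarith [mul_nonneg ht.1 hkpos]
        exact mul_le_of_le_one_right (Real.rpow_nonneg ht.1 _) hexp
      have h2 : (∫ t in (0:ℝ)..c, t ^ (ν - 1)) = c ^ ν / ν := by
        rw [integral_rpow (Or.inl (by linarith)), show ν - 1 + 1 = ν by ring,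
          Real.zero_rpow hν.ne', sub_zero]
      rw [h2] at h1
      exact h1
    have hlo : ∀ y : ℝ, 0 < y →
        c ^ ν / ν - (y ^ (1/ν))⁻¹ / 2 * (c ^ (ν+1) / (ν+1)) ≤ g y := by
      intro y hy
      set k : ℝ := (y ^ (1/ν))⁻¹ with hk_def
      have hkpos : (0:ℝ) ≤ k := by positivity
      have hint1 : IntervalIntegrable (fun t : ℝ => t ^ (ν - 1)) volume 0 c :=
        intervalIntegral.intervalIntegrable_rpow' (by linarith)
      have hint2 : IntervalIntegrable (fun t : ℝ => k / 2 * t ^ ν) volume 0 c :=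
        (intervalIntegral.intervalIntegrable_rpow' (by linarith : (-1:ℝ) < ν)).const_mul _
      have hL : (∫ t in (0:ℝ)..c, (t ^ (ν - 1) - k / 2 * t ^ ν))
          = c ^ ν / ν - k / 2 * (c ^ (ν+1) / (ν+1)) := by
        rw [intervalIntegral.integral_sub hint1 hint2, intervalIntegral.integral_const_mul,
          integral_rpow (Or.inl (by linarith)), integral_rpow (Or.inl (by linarith)),
          show ν - 1 + 1 = ν by ring, Real.zero_rpow hν.ne',
          Real.zero_rpow (by linarith : ν + 1 ≠ 0), sub_zero, sub_zero]
      rw [← hL]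
      apply intervalIntegral.integral_mono_on hc0.le (hint1.sub hint2) (cev_intble hν _ c)
      intro t ht
      rcases eq_or_lt_of_le ht.1 with h | h
      · subst h
        simp [Real.zero_rpow hν.ne']
      · have hrt : t ^ ν = t ^ (ν - 1) * t := by
          rw [show ν = ν - 1 + 1 by ring, Real.rpow_add h, Real.rpow_one]
          ring_nf
        have hexp : -(t * k)/2 + 1 ≤ Real.exp (-(t * k)/2) := Real.add_one_le_exp _
        have h0 : (0:ℝ) ≤ t ^ (ν - 1) := Real.rpow_nonneg h.le _
        have : t ^ (ν - 1) - k / 2 * t ^ ν = t ^ (ν - 1) * (1 - t * k / 2) := by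
          rw [hrt]; ring
        rw [this]
        exact mul_le_mul_of_nonneg_left (by linarith) h0
    have htg : Tendsto g atTop (nhds (c ^ ν / ν)) := by
      refine tendsto_of_tendsto_of_tendsto_of_le_of_le'
        (g := fun y : ℝ => c ^ ν / ν - (y ^ (1/ν))⁻¹ / 2 * (c ^ (ν+1) / (ν+1)))
        ?_ tendsto_const_nhds ?_ ?_
      · have hL : Tendsto (fun y : ℝ => c ^ ν / ν - (y ^ (1/ν))⁻¹ / 2 * (c ^ (ν+1) / (ν+1)))
            atTop (nhds (c ^ ν / ν - 0 / 2 * (c ^ (ν+1) / (ν+1)))) :=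
          Tendsto.sub tendsto_const_nhds ((hkT.div_const 2).mul_const _)
        simpa using hL
      · filter_upwards [eventually_gt_atTop 0] with y hy using hlo y hy
      · filter_upwards [eventually_gt_atTop 0] with y hy using hup y hy
    have hfin : Tendsto (fun y : ℝ => g y / D) atTop (nhds (c ^ ν / ν / D)) :=
      htg.div_const D
    have hval : c ^ ν / ν / D = (2*ν^2 / (a^2*τ)) ^ ν / (ν * Real.Gamma ν) := by
      have h2 : (2*ν^2 / (a^2*τ)) = c / 2 := by
        rw [hc_def]
        field_simp
      rw [h2, Real.div_rpow hc0.le (by norm_num : (0:ℝ) ≤ 2), hD_def,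
        div_div, div_div, mul_left_comm]
    rw [← hval]
    apply Tendsto.congr' _ hfin
    filter_upwards [eventually_gt_atTop 0] with y hy
    exact (hvg y hy).symm
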